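/- Let Q be a closed symmetric operator on a Hilbert space H and ρ a selfadjoint unitary (ρ* = ρ, ρ² = I) that anticommutes with Q, i.e., ρ(dom Q) ⊆ dom Q and ρQρ = −Q. Define [Q]_ρ as the restriction of Q* to the domain {x ∈ dom Q* : (ρ − I)x ∈ dom Q}. Then [Q]_ρ is a selfadjoint extension of Q. -/

import Mathlib

open LinearPMap

local notation "⟪" x ", " y "⟫" => @inner ℂ _ _ x y

theorem aux_closed {H : Type*} [NormedAddCommGroup H] [InnerProductSpace ℂ H]
    [CompleteSpace H]
    (Q : H →ₗ.[ℂ] H) (hdense : Dense (Q.domain : Set H))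
    (hclosed : IsClosed (Q.graph : Set (H × H))) (u w : H)
    (hP : ∀ y : Q.adjoint.domain, ⟪w, (y : H)⟫ = ⟪u, Q.adjoint y⟫) :
    (u, w) ∈ Q.graph := by
  set G : Submodule ℂ (WithLp 2 (H × H)) :=
    Q.graph.comap (WithLp.linearEquiv 2 ℂ (H × H) : WithLp 2 (H × H) →ₗ[ℂ] H × H) with hG
  have hGclosed : IsClosed (G : Set (WithLp 2 (H × H))) :=
    hclosed.preimage (WithLp.prod_continuous_ofLp 2 H H)
  have key : (WithLp.equiv 2 (H × H)).symm (u, w) ∈ Gᗮᗮ := by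
    rw [Submodule.mem_orthogonal]
    intro v hv
    rw [Submodule.mem_orthogonal] at hv
    have hb : ∀ x : Q.domain, ⟪(x : H), v.fst⟫ + ⟪Q x, v.snd⟫ = 0 := by
      intro x
      have hz : (WithLp.equiv 2 (H × H)).symm ((x : H), Q x) ∈ G := by
        simp only [hG, Submodule.mem_comap]
        exact Q.mem_graph x
      have := hv _ hz
      rwa [WithLp.prod_inner_apply] at this
    have hb' : ∀ x : Q.domain, ⟪-v.fst, (x : H)⟫ = ⟪v.snd, Q x⟫ := by
      intro x
      have h0 := congrArg (starRingEnd ℂ) (hb x)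
      simp only [_root_.map_add, inner_conj_symm, _root_.map_zero] at h0
      rw [inner_neg_left]
      linear_combination -h0
    have hbmem : v.snd ∈ Q.adjoint.domain :=
      mem_adjoint_domain_of_exists _ ⟨-v.fst, hb'⟩
    have hQb : Q.adjoint ⟨v.snd, hbmem⟩ = -v.fst :=
      adjoint_apply_eq hdense _ hb'
    have hPb := hP ⟨v.snd, hbmem⟩
    rw [hQb, inner_neg_right] at hPb
    have h1 := congrArg (starRingEnd ℂ) hPb
    simp only [inner_conj_symm, _root_.map_neg] at h1
    rw [WithLp.prod_inner_apply, WithLp.equiv_symm_apply, WithLp.ofLp_toLp]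
    show ⟪v.fst, u⟫ + ⟪v.snd, w⟫ = 0
    linear_combination h1
  rw [Submodule.orthogonal_orthogonal_eq_closure,
    hGclosed.submodule_topologicalClosure_eq] at key
  exact key
/-- Let Q be a densely defined closed symmetric operator on a
complex Hilbert space H and ρ a selfadjoint unitary anticommuting with Q
(ρ preserves dom Q and ρQρ = −Q on dom Q).  Then the restriction [Q]_ρ of the
adjoint Q† to {x ∈ dom Q† : (ρ − 1)x ∈ dom Q} is a selfadjoint extension
of Q. -/
theorem stmt_15 (H : Type*) [NormedAddCommGroup H] [InnerProductSpace ℂ H]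
    [CompleteSpace H]
    (Q : H →ₗ.[ℂ] H) (hdense : Dense (Q.domain : Set H))
    (hclosed : IsClosed (Q.graph : Set (H × H)))
    (hsymm : Q ≤ Q.adjoint)
    (ρ : H →L[ℂ] H) (hρ : IsSelfAdjoint ρ) (hρ2 : ρ * ρ = 1)
    (hρdom : ∀ x ∈ Q.domain, ρ x ∈ Q.domain)
    (hanti : ∀ (x : H) (hx : x ∈ Q.domain),
      Q ⟨ρ x, hρdom x hx⟩ = - ρ (Q ⟨x, hx⟩)) :
    ∃ E : H →ₗ.[ℂ] H,
      (∀ x : H, x ∈ E.domain ↔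
        ∃ hx : x ∈ Q.adjoint.domain, ρ x - x ∈ Q.domain) ∧
      (E ≤ Q.adjoint) ∧ (Q ≤ E) ∧ E.adjoint = E := by
  have hρinv : ∀ x : H, ρ (ρ x) = x := by
    intro x
    have h := congrArg (fun f : H →L[ℂ] H => f x) hρ2
    simpa using h
  have hρinner : ∀ x y : H, ⟪ρ x, y⟫ = ⟪x, ρ y⟫ := by
    intro x y
    conv_lhs => rw [← hρ.adjoint_eq]
    exact ContinuousLinearMap.adjoint_inner_left ρ y x
  have haA : Q.adjoint.IsFormalAdjoint Q := adjoint_isFormalAdjoint hdense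
  -- ρ preserves the adjoint domain and anticommutes with the adjoint
  have hinner_calc : ∀ (x : H) (hx : x ∈ Q.adjoint.domain) (v : Q.domain),
      ⟪-ρ (Q.adjoint ⟨x, hx⟩), (v : H)⟫ = ⟪ρ x, Q v⟫ := by
    intro x hx v
    calc ⟪-ρ (Q.adjoint ⟨x, hx⟩), (v : H)⟫
        = -⟪Q.adjoint ⟨x, hx⟩, ρ (v : H)⟫ := by rw [inner_neg_left, hρinner]
      _ = -⟪x, Q ⟨ρ (v : H), hρdom (v : H) v.2⟩⟫ := by
          rw [haA ⟨x, hx⟩ ⟨ρ (v : H), hρdom (v : H) v.2⟩]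
      _ = -⟪x, -ρ (Q v)⟫ := by rw [hanti (v : H) v.2]
      _ = ⟪x, ρ (Q v)⟫ := by rw [inner_neg_right, neg_neg]
      _ = ⟪ρ x, Q v⟫ := (hρinner x (Q v)).symm
  have hρAdom : ∀ x : H, x ∈ Q.adjoint.domain → ρ x ∈ Q.adjoint.domain := by
    intro x hx
    exact mem_adjoint_domain_of_exists _
      ⟨-ρ (Q.adjoint ⟨x, hx⟩), hinner_calc x hx⟩
  have hρAval : ∀ x : Q.adjoint.domain,
      Q.adjoint ⟨ρ (x : H), hρAdom (x : H) x.2⟩ = -ρ (Q.adjoint x) := by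
    intro x
    exact adjoint_apply_eq hdense _ (hinner_calc (x : H) x.2)
  -- the domain D and the extension E
  set D : Submodule ℂ H :=
    Q.adjoint.domain ⊓ Submodule.comap ((ρ : H →ₗ[ℂ] H) - LinearMap.id) Q.domain with hD
  set E : H →ₗ.[ℂ] H := Q.adjoint.domRestrict D with hEdef
  have hmemE : ∀ x : H, x ∈ E.domain ↔
      x ∈ Q.adjoint.domain ∧ ρ x - x ∈ Q.domain := by
    intro x
    rw [hEdef, domRestrict_domain, Submodule.mem_inf, hD, Submodule.mem_inf,
      Submodule.mem_comap]
    simp only [LinearMap.sub_apply, LinearMap.id_apply, ContinuousLinearMap.coe_coe]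
    tauto
  have hQE : Q ≤ E := by
    constructor
    · intro x hx
      exact (hmemE x).2 ⟨hsymm.1 hx, Q.domain.sub_mem (hρdom x hx) hx⟩
    · intro x y hxy
      have hyA : (y : H) ∈ Q.adjoint.domain := ((hmemE (y : H)).1 y.2).1
      have h1 : E y = Q.adjoint ⟨(y : H), hyA⟩ := domRestrict_apply rfl
      rw [h1]
      exact hsymm.2 hxy
  have hEA : E ≤ Q.adjoint := domRestrict_le
  have hEdense : Dense (E.domain : Set H) :=
    Dense.mono (fun x hx => hQE.1 hx) hdense
  -- eigen-decomposition
  have hsplit : ∀ u : Q.adjoint.domain, ∃ a b : Q.adjoint.domain,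
      u = a + b ∧ ρ (a : H) = (a : H) ∧ ρ (b : H) = -(b : H) ∧
      (b : H) = (2 : ℂ)⁻¹ • ((u : H) - ρ (u : H)) := by
    intro u
    have ha : ((2 : ℂ)⁻¹ • ((u : H) + ρ (u : H))) ∈ Q.adjoint.domain :=
      Submodule.smul_mem _ _ (Submodule.add_mem _ u.2 (hρAdom _ u.2))
    have hb : ((2 : ℂ)⁻¹ • ((u : H) - ρ (u : H))) ∈ Q.adjoint.domain :=
      Submodule.smul_mem _ _ (Submodule.sub_mem _ u.2 (hρAdom _ u.2))
    refine ⟨⟨_, ha⟩, ⟨_, hb⟩, ?_, ?_, ?_, rfl⟩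
    · apply Subtype.ext
      show (u : H) = (2 : ℂ)⁻¹ • ((u : H) + ρ (u : H)) +
        (2 : ℂ)⁻¹ • ((u : H) - ρ (u : H))
      module
    · show ρ ((2 : ℂ)⁻¹ • ((u : H) + ρ (u : H))) =
        (2 : ℂ)⁻¹ • ((u : H) + ρ (u : H))
      rw [_root_.map_smul, _root_.map_add, hρinv]
      module
    · show ρ ((2 : ℂ)⁻¹ • ((u : H) - ρ (u : H))) =
        -((2 : ℂ)⁻¹ • ((u : H) - ρ (u : H)))
      rw [_root_.map_smul, _root_.map_sub, hρinv]
      module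
  have hfix : ∀ u : Q.adjoint.domain, ρ (u : H) = (u : H) →
      Q.adjoint u = -ρ (Q.adjoint u) := by
    intro u hu
    have h := hρAval u
    rwa [show (⟨ρ (u : H), hρAdom (u : H) u.2⟩ : Q.adjoint.domain) = u
      from Subtype.ext hu] at h
  have hneg : ∀ u : Q.adjoint.domain, ρ (u : H) = -(u : H) →
      ρ (Q.adjoint u) = Q.adjoint u := by
    intro u hu
    have h := hρAval u
    rw [show (⟨ρ (u : H), hρAdom (u : H) u.2⟩ : Q.adjoint.domain) = -u
      from Subtype.ext (by simpa using hu), LinearPMap.map_neg] at h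
    have h2 : Q.adjoint u = ρ (Q.adjoint u) := neg_injective h
    exact h2.symm
  have hPP : ∀ u v : Q.adjoint.domain, ρ (u : H) = (u : H) → ρ (v : H) = (v : H) →
      ⟪Q.adjoint u, (v : H)⟫ = 0 := by
    intro u v hu hv
    have h1 := hfix u hu
    have h2 : ⟪Q.adjoint u, (v : H)⟫ = -⟪Q.adjoint u, (v : H)⟫ := by
      conv_lhs => rw [h1]
      rw [inner_neg_left, hρinner, hv]
    linear_combination (2 : ℂ)⁻¹ * h2
  have hNN : ∀ u v : Q.adjoint.domain, ρ (u : H) = -(u : H) → ρ (v : H) = -(v : H) →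
      ⟪Q.adjoint u, (v : H)⟫ = 0 := by
    intro u v hu hv
    have h1 := hneg u hu
    have h2 : ⟪Q.adjoint u, (v : H)⟫ = -⟪Q.adjoint u, (v : H)⟫ := by
      conv_lhs => rw [← h1]
      rw [hρinner, hv, inner_neg_right]
    linear_combination (2 : ℂ)⁻¹ * h2
  have hBQ : ∀ (u v : Q.adjoint.domain), ((u : H) ∈ Q.domain) →
      ⟪Q.adjoint u, (v : H)⟫ = ⟪(u : H), Q.adjoint v⟫ := by
    intro u v hu
    have h1 : Q.adjoint u = Q ⟨(u : H), hu⟩ := (hsymm.2 rfl).symm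
    rw [h1]
    have h2 := haA v ⟨(u : H), hu⟩
    have h3 := congrArg (starRingEnd ℂ) h2
    simp only [inner_conj_symm] at h3
    exact h3.symm
  have hQB : ∀ (u v : Q.adjoint.domain), ((v : H) ∈ Q.domain) →
      ⟪Q.adjoint u, (v : H)⟫ = ⟪(u : H), Q.adjoint v⟫ := by
    intro u v hv
    have h1 : Q.adjoint v = Q ⟨(v : H), hv⟩ := (hsymm.2 rfl).symm
    rw [h1]
    exact haA u ⟨(v : H), hv⟩
  have hBD : ∀ u v : Q.adjoint.domain, ρ (u : H) - (u : H) ∈ Q.domain →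
      ρ (v : H) - (v : H) ∈ Q.domain →
      ⟪Q.adjoint u, (v : H)⟫ = ⟪(u : H), Q.adjoint v⟫ := by
    intro u v hu hv
    obtain ⟨a, b, hab, ha, hb, hbval⟩ := hsplit u
    obtain ⟨c, d, hcd, hc, hd, hdval⟩ := hsplit v
    have hbQ : (b : H) ∈ Q.domain := by
      rw [hbval, show ((u : H) - ρ (u : H)) = -(ρ (u : H) - (u : H)) from by module]
      exact Q.domain.smul_mem _ (Q.domain.neg_mem hu)
    have hdQ : (d : H) ∈ Q.domain := by
      rw [hdval, show ((v : H) - ρ (v : H)) = -(ρ (v : H) - (v : H)) from by module]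
      exact Q.domain.smul_mem _ (Q.domain.neg_mem hv)
    have h1 : ⟪Q.adjoint a, (c : H)⟫ = ⟪(a : H), Q.adjoint c⟫ := by
      rw [hPP a c ha hc, ← inner_conj_symm, hPP c a hc ha, _root_.map_zero]
    have h2 : ⟪Q.adjoint a, (d : H)⟫ = ⟪(a : H), Q.adjoint d⟫ := hQB a d hdQ
    have h3 : ⟪Q.adjoint b, (c : H)⟫ = ⟪(b : H), Q.adjoint c⟫ := hBQ b c hbQ
    have h4 : ⟪Q.adjoint b, (d : H)⟫ = ⟪(b : H), Q.adjoint d⟫ := hBQ b d hbQ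
    rw [hab, hcd, LinearPMap.map_add, Submodule.coe_add, Submodule.coe_add,
      LinearPMap.map_add]
    simp only [inner_add_left, inner_add_right]
    linear_combination h1 + h2 + h3 + h4
  -- E is symmetric
  have hEF : E.IsFormalAdjoint E := by
    intro x y
    have hx := (hmemE (x : H)).1 x.2
    have hy := (hmemE (y : H)).1 y.2
    have hx' : E x = Q.adjoint ⟨(x : H), hx.1⟩ := domRestrict_apply rfl
    have hy' : E y = Q.adjoint ⟨(y : H), hy.1⟩ := domRestrict_apply rfl
    rw [hx', hy']
    exact hBD ⟨(x : H), hx.1⟩ ⟨(y : H), hy.1⟩ hx.2 hy.2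
  have hEsub : E ≤ E.adjoint := hEF.le_adjoint hEdense
  have hEadjA : E.adjoint ≤ Q.adjoint := by
    have hform : E.adjoint.IsFormalAdjoint Q := by
      intro x y
      have hyE : (y : H) ∈ E.domain := hQE.1 y.2
      have h1 := adjoint_isFormalAdjoint hEdense x ⟨(y : H), hyE⟩
      have h2 : Q y = E ⟨(y : H), hyE⟩ := hQE.2 rfl
      rw [h2]
      exact h1
    exact hform.symm.le_adjoint hdense
  have hAdjLE : E.adjoint ≤ E := by
    constructor
    · intro x hx
      have hxA : x ∈ Q.adjoint.domain := hEadjA.1 hx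
      have huA : ρ x - x ∈ Q.adjoint.domain :=
        Submodule.sub_mem _ (hρAdom x hxA) hxA
      have hρu : ρ (ρ x - x) = -(ρ x - x) := by
        rw [_root_.map_sub, hρinv]; module
      have hP : ∀ y : Q.adjoint.domain,
          ⟪Q.adjoint ⟨ρ x - x, huA⟩, (y : H)⟫ = ⟪ρ x - x, Q.adjoint y⟫ := by
        intro y
        obtain ⟨c, d, hcd, hc, hd, hdval⟩ := hsplit y
        have hcE : (c : H) ∈ E.domain := (hmemE _).2
          ⟨c.2, by rw [hc, sub_self]; exact Q.domain.zero_mem⟩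
        have hstar := adjoint_isFormalAdjoint hEdense
          (⟨x, hx⟩ : E.adjoint.domain) ⟨(c : H), hcE⟩
        have hEadjx : E.adjoint ⟨x, hx⟩ = Q.adjoint ⟨x, hxA⟩ := hEadjA.2 rfl
        have hEc : E ⟨(c : H), hcE⟩ = Q.adjoint c := domRestrict_apply rfl
        rw [hEadjx, hEc] at hstar
        have hAu : Q.adjoint ⟨ρ x - x, huA⟩ =
            -ρ (Q.adjoint ⟨x, hxA⟩) - Q.adjoint ⟨x, hxA⟩ := by
          rw [show (⟨ρ x - x, huA⟩ : Q.adjoint.domain) =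
            ⟨ρ x, hρAdom x hxA⟩ - ⟨x, hxA⟩ from Subtype.ext rfl,
            LinearPMap.map_sub, hρAval ⟨x, hxA⟩]
        have hzd1 : ⟪Q.adjoint ⟨ρ x - x, huA⟩, (d : H)⟫ = 0 :=
          hNN ⟨ρ x - x, huA⟩ d hρu hd
        have hzd2 : ⟪ρ x - x, Q.adjoint d⟫ = 0 := by
          rw [← inner_conj_symm, hNN d ⟨ρ x - x, huA⟩ hd hρu, _root_.map_zero]
        have hρAc : ρ (Q.adjoint c) = -Q.adjoint c := by
          have h5 := congrArg ρ (hfix c hc)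
          simpa only [_root_.map_neg, hρinv] using h5
        have hc1 : ⟪Q.adjoint ⟨ρ x - x, huA⟩, (c : H)⟫ =
            -(2 : ℂ) * ⟪Q.adjoint ⟨x, hxA⟩, (c : H)⟫ := by
          rw [hAu, inner_sub_left, inner_neg_left, hρinner, hc]; ring
        have hc2 : ⟪ρ x - x, Q.adjoint c⟫ = -(2 : ℂ) * ⟪x, Q.adjoint c⟫ := by
          rw [inner_sub_left, hρinner, hρAc, inner_neg_right]; ring
        rw [hcd, Submodule.coe_add, LinearPMap.map_add, inner_add_right,
          inner_add_right, hzd1, hzd2, hc1, hc2, hstar]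
        try ring
      have hgraph := aux_closed Q hdense hclosed (ρ x - x)
        (Q.adjoint ⟨ρ x - x, huA⟩) hP
      exact (hmemE x).2 ⟨hxA, Q.mem_domain_of_mem_graph hgraph⟩
    · intro x y hxy
      have h1 : E.adjoint x = Q.adjoint ⟨(x : H), hEadjA.1 x.2⟩ := hEadjA.2 rfl
      have h2 : E y = Q.adjoint ⟨(y : H), ((hmemE (y : H)).1 y.2).1⟩ :=
        domRestrict_apply rfl
      rw [h1, h2]
      congr 1
      exact Subtype.ext hxy
  refine ⟨E, ?_, hEA, hQE, le_antisymm hAdjLE hEsub⟩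
  intro x
  rw [hmemE]
  exact ⟨fun h => ⟨h.1, h.2⟩, fun h => ⟨h.1, h.2⟩⟩
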